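/- For every z ∈ ℂ with z ∉ {0, b, −c}, one has f(z)·g(z) = √(a²+1)·(i−a)·(z + i√(bc))² / (z(z+c)(z−b)). -/

import Mathlib

open Complex Real

/-- With `b, c > 0`, `a = √(b/c)`, `f(z) = √(a+i)·(i/(z+c) − a/(z−b))` and
`g(z) = √(a−i)·(iac/z + 1)`, one has
`f(z)·g(z) = √(a²+1)·(i−a)·(z + i√(bc))²/(z(z+c)(z−b))` for `z ∉ {0, b, −c}`. -/
theorem stmt14 (b c : ℝ) (hb : 0 < b) (hc : 0 < c) (a : ℝ) (ha : a = Real.sqrt (b / c))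
    (f g : ℂ → ℂ)
    (hf : ∀ z : ℂ, f z = ((a : ℂ) + I) ^ ((1 : ℂ) / 2) * (I / (z + (c : ℂ)) - (a : ℂ) / (z - (b : ℂ))))
    (hg : ∀ z : ℂ, g z = ((a : ℂ) - I) ^ ((1 : ℂ) / 2) * (I * (a : ℂ) * (c : ℂ) / z + 1))
    (z : ℂ) (hz0 : z ≠ 0) (hzb : z ≠ (b : ℂ)) (hzc : z ≠ -(c : ℂ)) :
    f z * g z
      = (Real.sqrt (a ^ 2 + 1) : ℂ) * (I - (a : ℂ)) * (z + I * (Real.sqrt (b * c) : ℂ)) ^ 2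
          / (z * (z + (c : ℂ)) * (z - (b : ℂ))) := by
  have ha0 : 0 < a := by
    rw [ha]; exact Real.sqrt_pos.mpr (div_pos hb hc)
  have ha2 : a ^ 2 = b / c := by
    rw [ha, Real.sq_sqrt (le_of_lt (div_pos hb hc))]
  have hbac : b = a ^ 2 * c := by
    field_simp at ha2; linarith [ha2]
  have hacs : Real.sqrt (b * c) = a * c := by
    have : b * c = (a * c) ^ 2 := by rw [hbac]; ring
    rw [this, Real.sqrt_sq (by positivity)]
  -- the square-root factor
  set w : ℂ := ((a : ℂ) + I) ^ ((1 : ℂ) / 2) with hw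
  have harg : ((a : ℂ) + I).arg ≠ π := by
    intro h
    have him := (Complex.arg_eq_pi_iff.mp h).2
    simp at him
  have hconj : ((a : ℂ) - I) ^ ((1 : ℂ) / 2) = (starRingEnd ℂ) w := by
    have h1 : ((a : ℂ) - I) = (starRingEnd ℂ) ((a : ℂ) + I) := by
      simp [Complex.ext_iff]
    have h2 : ((1 : ℂ) / 2) = (starRingEnd ℂ) ((1 : ℂ) / 2) := by
      simp [Complex.ext_iff]
    rw [h1, Complex.conj_cpow _ _ harg, ← h2]
  have habs : ‖((a : ℂ) + I)‖ = Real.sqrt (a ^ 2 + 1) := by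
    rw [Complex.norm_def, Complex.normSq_apply]
    norm_num
    ring_nf
  have hsq : w * ((a : ℂ) - I) ^ ((1 : ℂ) / 2) = (Real.sqrt (a ^ 2 + 1) : ℂ) := by
    rw [hconj, Complex.mul_conj, Complex.normSq_eq_norm_sq]
    have : ‖w‖ = Real.sqrt (Real.sqrt (a ^ 2 + 1)) := by
      have : ((1 : ℂ) / 2) = ((1 / 2 : ℝ) : ℂ) := by norm_num
      rw [hw, this, Complex.norm_cpow_real, habs, ← Real.sqrt_eq_rpow]
    rw [this]
    norm_cast
    rw [Real.sq_sqrt (Real.sqrt_nonneg _)]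
  -- denominators
  have hzc' : z + (c : ℂ) ≠ 0 := by
    intro h; apply hzc; linear_combination h
  have hzb' : z - (b : ℂ) ≠ 0 := by
    intro h; apply hzb; linear_combination h
  have ha0' : (a : ℂ) ≠ 0 := by exact_mod_cast ha0.ne'
  -- main algebraic identity
  rw [hf, hg]
  rw [show ((a : ℂ) + I) ^ ((1 : ℂ) / 2) * (I / (z + (c : ℂ)) - (a : ℂ) / (z - (b : ℂ))) *
      (((a : ℂ) - I) ^ ((1 : ℂ) / 2) * (I * (a : ℂ) * (c : ℂ) / z + 1)) =
      (((a : ℂ) + I) ^ ((1 : ℂ) / 2) * ((a : ℂ) - I) ^ ((1 : ℂ) / 2)) *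
      ((I / (z + (c : ℂ)) - (a : ℂ) / (z - (b : ℂ))) * (I * (a : ℂ) * (c : ℂ) / z + 1)) by ring,
    hsq, hacs]
  have hbC : (b : ℂ) = (a : ℂ) ^ 2 * (c : ℂ) := by exact_mod_cast congrArg (Complex.ofReal) hbac
  have key : (I / (z + (c : ℂ)) - (a : ℂ) / (z - (b : ℂ))) * (I * (a : ℂ) * (c : ℂ) / z + 1) =
      (I - (a : ℂ)) * (z + I * ((a : ℂ) * (c : ℂ))) ^ 2 / (z * (z + (c : ℂ)) * (z - (b : ℂ))) := by
    have hI3 : (I : ℂ) ^ 3 = -I := by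
      rw [pow_succ, Complex.I_sq]; ring
    field_simp
    rw [hbC]
    ring_nf
    simp only [hI3, Complex.I_sq]
    ring
  rw [key]
  push_cast
  ring
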